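/- Let b ∈ ℝ^m, A ∈ ℝ^{m×n}, T invertible, σ, η > 0, λ = σ²/η², and H = AᵀA + λTᵀT positive definite. If (σ, η) maximizes the marginal likelihood p(b|σ,η) of the Gaussian model, then σ² = ‖Au_λ − b‖₂² / (m − trace(H⁻¹AᵀA)) and η² = ‖Tu_λ‖₂² / (n − λ·trace(H⁻¹TᵀT)), where u_λ = H⁻¹Aᵀb, provided the denominators are nonzero. -/

import Mathlib

open Matrix MeasureTheory Real Finset

lemma gauss_pi (n : ℕ) {k : ℝ} (hk : 0 < k) :
    ∫ v : Fin n → ℝ, Real.exp (-(∑ i, v i ^ 2) / (2 * k)) = (2 * π * k) ^ ((n : ℝ) / 2) := by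
  have h1 : ∀ v : Fin n → ℝ, Real.exp (-(∑ i, v i ^ 2) / (2 * k))
      = ∏ i, Real.exp (-(1 / (2 * k)) * (v i) ^ 2) := by
    intro v
    rw [← Real.exp_sum]
    congr 1
    rw [neg_div, Finset.sum_div, ← Finset.sum_neg_distrib]
    exact Finset.sum_congr rfl fun i _ => by ring
  calc ∫ v : Fin n → ℝ, Real.exp (-(∑ i, v i ^ 2) / (2 * k))
      = ∫ v : Fin n → ℝ, ∏ i, Real.exp (-(1 / (2 * k)) * (v i) ^ 2) := by simp_rw [h1]
    _ = (∫ x : ℝ, Real.exp (-(1 / (2 * k)) * x ^ 2)) ^ (Fintype.card (Fin n)) :=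
        MeasureTheory.integral_fintype_prod_eq_pow (ι := Fin n) (fun x : ℝ => Real.exp (-(1/(2*k)) * x ^ 2))
    _ = (Real.sqrt (π / (1 / (2 * k)))) ^ n := by rw [integral_gaussian]; simp
    _ = (2 * π * k) ^ ((n : ℝ) / 2) := by
        have h2 : π / (1 / (2 * k)) = 2 * π * k := by field_simp
        rw [h2, Real.sqrt_eq_rpow, ← Real.rpow_natCast ((2 * π * k) ^ ((1:ℝ)/2)) n,
          ← Real.rpow_mul (by positivity)]
        ring_nf

lemma integral_comp_mulVec {n : ℕ} {S : Matrix (Fin n) (Fin n) ℝ} (hS : S.det ≠ 0)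
    (f : (Fin n → ℝ) → ℝ) (hf : Continuous f) :
    ∫ u : Fin n → ℝ, f (S.mulVec u) = |S.det|⁻¹ * ∫ v : Fin n → ℝ, f v := by
  have hmap := Real.map_matrix_volume_pi_eq_smul_volume_pi hS
  have h1 : ∫ u : Fin n → ℝ, f (S.mulVec u)
      = ∫ v : Fin n → ℝ, f v ∂(Measure.map (Matrix.toLin' S) volume) := by
    rw [MeasureTheory.integral_map (by fun_prop) hf.aestronglyMeasurable]
    simp [Matrix.toLin'_apply]
  rw [h1, hmap, integral_smul_measure, ENNReal.toReal_ofReal (abs_nonneg _), abs_inv,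
    smul_eq_mul]

open scoped MatrixOrder in
lemma quad_integral {n : ℕ} {M : Matrix (Fin n) (Fin n) ℝ} (hM : M.PosDef) {k : ℝ} (hk : 0 < k) :
    ∫ u : Fin n → ℝ, Real.exp (-(u ⬝ᵥ M.mulVec u) / (2 * k))
      = (2 * π * k) ^ ((n : ℝ) / 2) / Real.sqrt M.det := by
  set S := CFC.sqrt M with hSdef
  have hSS : S * S = M := CFC.sqrt_mul_sqrt_self M hM.posSemidef.nonneg
  have hSsym : Sᵀ = S := by
    have := (CFC.sqrt_nonneg M).posSemidef.isHermitian
    simpa [Matrix.IsHermitian, Matrix.conjTranspose_eq_transpose_of_trivial] using this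
  have hdet2 : S.det * S.det = M.det := by rw [← Matrix.det_mul, hSS]
  have hSd0 : 0 ≤ S.det := by
    have hps := (CFC.sqrt_nonneg M).posSemidef
    rw [hps.isHermitian.det_eq_prod_eigenvalues]
    exact Finset.prod_nonneg fun i _ => hps.eigenvalues_nonneg i
  have hMd : 0 < M.det := hM.det_pos
  have hSd : 0 < S.det := by nlinarith
  have hsqrt : Real.sqrt M.det = S.det := by
    rw [← hdet2, Real.sqrt_mul_self hSd.le]
  have hquad : ∀ u : Fin n → ℝ, u ⬝ᵥ M.mulVec u = ∑ i, (S.mulVec u) i ^ 2 := by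
    intro u
    have : ∑ i, (S.mulVec u) i ^ 2 = (S.mulVec u) ⬝ᵥ (S.mulVec u) := by
      simp [dotProduct, sq]
    rw [this, ← hSS, ← Matrix.mulVec_mulVec, Matrix.dotProduct_mulVec]
    congr 1
    conv_lhs => rw [← hSsym]
    rw [Matrix.vecMul_transpose]
  calc ∫ u : Fin n → ℝ, Real.exp (-(u ⬝ᵥ M.mulVec u) / (2 * k))
      = ∫ u : Fin n → ℝ, Real.exp (-(∑ i, (S.mulVec u) i ^ 2) / (2 * k)) := by simp_rw [hquad]
    _ = |S.det|⁻¹ * ∫ v : Fin n → ℝ, Real.exp (-(∑ i, v i ^ 2) / (2 * k)) :=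
        integral_comp_mulVec (by positivity)
          (fun v => Real.exp (-(∑ i, v i ^ 2) / (2 * k))) (by fun_prop)
    _ = (2 * π * k) ^ ((n : ℝ) / 2) / Real.sqrt M.det := by
        rw [gauss_pi n hk, hsqrt, abs_of_pos hSd]
        field_simp

section aux
variable {m n : ℕ} (A : Matrix (Fin m) (Fin n) ℝ) (T : Matrix (Fin n) (Fin n) ℝ)
  (b : Fin m → ℝ)

noncomputable def Hl (l : ℝ) : Matrix (Fin n) (Fin n) ℝ := Aᵀ * A + l • (Tᵀ * T)

noncomputable def ul (l : ℝ) : Fin n → ℝ := (Hl A T l)⁻¹ *ᵥ (Aᵀ *ᵥ b)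

noncomputable def Rl (l : ℝ) : ℝ := b ⬝ᵥ b - (Aᵀ *ᵥ b) ⬝ᵥ ul A T b l

noncomputable def Dl (l : ℝ) : ℝ := (Hl A T l).det

lemma Hl_transpose (l : ℝ) : (Hl A T l)ᵀ = Hl A T l := by
  simp [Hl, Matrix.transpose_add, Matrix.transpose_smul, Matrix.transpose_mul]

lemma dot_sq_eq {N : ℕ} (w : Fin N → ℝ) : ∑ i, w i ^ 2 = w ⬝ᵥ w := by
  simp [dotProduct, sq]

lemma dot_TtT {M N : ℕ} (B : Matrix (Fin M) (Fin N) ℝ) (u : Fin N → ℝ) :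
    u ⬝ᵥ ((Bᵀ * B) *ᵥ u) = (B *ᵥ u) ⬝ᵥ (B *ᵥ u) := by
  rw [← Matrix.mulVec_mulVec, Matrix.dotProduct_mulVec, Matrix.vecMul_transpose]

lemma symm_pair {M : Matrix (Fin n) (Fin n) ℝ} (hMs : Mᵀ = M) (v w : Fin n → ℝ) :
    v ⬝ᵥ (M *ᵥ w) = w ⬝ᵥ (M *ᵥ v) := by
  rw [Matrix.dotProduct_mulVec]
  conv_lhs => rw [← hMs]
  rw [Matrix.vecMul_transpose, dotProduct_comm]

lemma Hl_posDef (hT : IsUnit T.det) {l : ℝ} (hl : 0 < l) : (Hl A T l).PosDef := by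
  refine Matrix.PosDef.of_dotProduct_mulVec_pos ?_ ?_
  · show (Hl A T l)ᴴ = _
    have := Hl_transpose A T l
    simpa [Matrix.conjTranspose_eq_transpose_of_trivial] using congrArg id this
  · intro x hx
    have hTx : T *ᵥ x ≠ 0 := by
      have : Function.Injective (T.mulVec) :=
        Matrix.mulVec_injective_iff_isUnit.2 ((Matrix.isUnit_iff_isUnit_det T).mpr hT)
      intro h
      exact hx (by simpa using this (h.trans (Matrix.mulVec_zero T).symm))
    have h0 : (0:ℝ) ≤ (T *ᵥ x) ⬝ᵥ (T *ᵥ x) := by rw [← dot_sq_eq]; positivity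
    have h1 : (0:ℝ) < (T *ᵥ x) ⬝ᵥ (T *ᵥ x) := by
      rcases lt_or_eq_of_le h0 with h | h
      · exact h
      · exact absurd (dotProduct_self_eq_zero.1 h.symm) hTx
    have h2 : (0:ℝ) ≤ (A *ᵥ x) ⬝ᵥ (A *ᵥ x) := by rw [← dot_sq_eq]; positivity
    have expand : x ⬝ᵥ ((Hl A T l) *ᵥ x)
        = (A *ᵥ x) ⬝ᵥ (A *ᵥ x) + l * ((T *ᵥ x) ⬝ᵥ (T *ᵥ x)) := by
      rw [Hl, Matrix.add_mulVec, dotProduct_add, Matrix.smul_mulVec,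
        dotProduct_smul, smul_eq_mul, dot_TtT T x]
      congr 1
      rw [← Matrix.mulVec_mulVec, Matrix.dotProduct_mulVec, Matrix.vecMul_transpose]
    show (0:ℝ) < (star x) ⬝ᵥ _
    rw [star_trivial, expand]
    have := mul_pos hl h1
    linarith
end aux
lemma quad_integral_shift {n : ℕ} {M : Matrix (Fin n) (Fin n) ℝ} (hM : M.PosDef) {k : ℝ}
    (hk : 0 < k) (w : Fin n → ℝ) :
    ∫ u : Fin n → ℝ, Real.exp (-((u - w) ⬝ᵥ M *ᵥ (u - w)) / (2 * k))
      = (2 * π * k) ^ ((n : ℝ) / 2) / Real.sqrt M.det := by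
  rw [← quad_integral hM hk]
  exact integral_sub_right_eq_self (fun u => Real.exp (-(u ⬝ᵥ M *ᵥ u) / (2 * k))) w

section sq
variable {m n : ℕ} (A : Matrix (Fin m) (Fin n) ℝ) (T : Matrix (Fin n) (Fin n) ℝ)
  (b : Fin m → ℝ)

lemma Hl_mulVec_ul (hT : IsUnit T.det) {l : ℝ} (hl : 0 < l) :
    (Hl A T l) *ᵥ (ul A T b l) = Aᵀ *ᵥ b := by
  rw [ul, Matrix.mulVec_mulVec, Matrix.mul_nonsing_inv _ (isUnit_iff_ne_zero.mpr (Hl_posDef A T hT hl).det_pos.ne'),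
    Matrix.one_mulVec]

lemma complete_square (hT : IsUnit T.det) {l : ℝ} (hl : 0 < l) (u : Fin n → ℝ) :
    (∑ i, (A *ᵥ u - b) i ^ 2) + l * (∑ i, (T *ᵥ u) i ^ 2)
      = (u - ul A T b l) ⬝ᵥ ((Hl A T l) *ᵥ (u - ul A T b l)) + Rl A T b l := by
  set β := Aᵀ *ᵥ b with hβ
  set u' := ul A T b l with hu'
  set H := Hl A T l with hH
  have hs : Hᵀ = H := Hl_transpose A T l
  have hHu' : H *ᵥ u' = β := Hl_mulVec_ul A T b hT hl
  have hexp : ∀ x : Fin n → ℝ, x ⬝ᵥ (H *ᵥ x)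
      = x ⬝ᵥ ((Aᵀ * A) *ᵥ x) + l * (x ⬝ᵥ ((Tᵀ * T) *ᵥ x)) := by
    intro x
    rw [hH, Hl, Matrix.add_mulVec, dotProduct_add, Matrix.smul_mulVec,
      dotProduct_smul, smul_eq_mul]
  have c1 : ∑ i, (A *ᵥ u - b) i ^ 2
      = u ⬝ᵥ ((Aᵀ * A) *ᵥ u) - 2 * (β ⬝ᵥ u) + b ⬝ᵥ b := by
    have e1 : (A *ᵥ u) ⬝ᵥ (A *ᵥ u) = u ⬝ᵥ ((Aᵀ * A) *ᵥ u) := (dot_TtT A u).symm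
    have e2 : b ⬝ᵥ (A *ᵥ u) = β ⬝ᵥ u := by
      rw [Matrix.dotProduct_mulVec, ← Matrix.mulVec_transpose]
    have e3 : (A *ᵥ u) ⬝ᵥ b = β ⬝ᵥ u := by rw [dotProduct_comm]; exact e2
    rw [dot_sq_eq, sub_dotProduct, dotProduct_sub, dotProduct_sub,
      e1, e2, e3]
    ring
  have c2 : ∑ i, (T *ᵥ u) i ^ 2 = u ⬝ᵥ ((Tᵀ * T) *ᵥ u) := by rw [dot_sq_eq, dot_TtT T u]
  have t1 : u ⬝ᵥ (H *ᵥ u') = β ⬝ᵥ u := by rw [hHu', dotProduct_comm]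
  have t2 : u' ⬝ᵥ (H *ᵥ u) = β ⬝ᵥ u := by rw [symm_pair hs u' u, t1]
  have t3 : u' ⬝ᵥ (H *ᵥ u') = β ⬝ᵥ u' := by rw [hHu', dotProduct_comm]
  have rhs_eq : (u - u') ⬝ᵥ (H *ᵥ (u - u'))
      = (u ⬝ᵥ ((Aᵀ * A) *ᵥ u) + l * (u ⬝ᵥ ((Tᵀ * T) *ᵥ u))) - 2 * (β ⬝ᵥ u) + β ⬝ᵥ u' := by
    rw [Matrix.mulVec_sub, dotProduct_sub, sub_dotProduct, sub_dotProduct,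
      t1, t2, t3, ← hexp u]
    ring
  rw [c1, c2, rhs_eq, Rl, ← hβ, ← hu']
  ring
end sq
section closed
variable {m n : ℕ} (A : Matrix (Fin m) (Fin n) ℝ) (T : Matrix (Fin n) (Fin n) ℝ)
  (b : Fin m → ℝ)

lemma p_closed (hT : IsUnit T.det) {s t : ℝ} (hs : 0 < s) (ht : 0 < t) :
    (∫ u : Fin n → ℝ,
        (2 * π * s ^ 2) ^ (-(m : ℝ) / 2) *
          Real.exp (-(∑ i, (A.mulVec u - b) i ^ 2) / (2 * s ^ 2)) *
          ((2 * π * t ^ 2) ^ (-(n : ℝ) / 2) * T.det *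
            Real.exp (-(∑ i, (T.mulVec u) i ^ 2) / (2 * t ^ 2))))
      = (2 * π * s ^ 2) ^ (-(m : ℝ) / 2) * ((2 * π * t ^ 2) ^ (-(n : ℝ) / 2) * T.det) *
          ((2 * π * s ^ 2) ^ ((n : ℝ) / 2) * ((Real.sqrt (Dl A T (s ^ 2 / t ^ 2)))⁻¹ *
            Real.exp (-(Rl A T b (s ^ 2 / t ^ 2)) / (2 * s ^ 2)))) := by
  have hl : 0 < s ^ 2 / t ^ 2 := by positivity
  set l : ℝ := s ^ 2 / t ^ 2 with hldef
  have hpd := Hl_posDef A T hT hl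
  have hs2 : (0:ℝ) < s ^ 2 := by positivity
  set C : ℝ := (2 * π * s ^ 2) ^ (-(m : ℝ) / 2) * ((2 * π * t ^ 2) ^ (-(n : ℝ) / 2) * T.det) *
      Real.exp (-(Rl A T b l) / (2 * s ^ 2)) with hC
  have hint : ∀ u : Fin n → ℝ,
      (2 * π * s ^ 2) ^ (-(m : ℝ) / 2) *
          Real.exp (-(∑ i, (A.mulVec u - b) i ^ 2) / (2 * s ^ 2)) *
          ((2 * π * t ^ 2) ^ (-(n : ℝ) / 2) * T.det *
            Real.exp (-(∑ i, (T.mulVec u) i ^ 2) / (2 * t ^ 2)))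
        = C * Real.exp (-((u - ul A T b l) ⬝ᵥ ((Hl A T l) *ᵥ (u - ul A T b l))) / (2 * s ^ 2)) := by
    intro u
    have hcs := complete_square A T b hT hl u
    have key : -(∑ i, (A.mulVec u - b) i ^ 2) / (2 * s ^ 2)
          + -(∑ i, (T.mulVec u) i ^ 2) / (2 * t ^ 2)
        = -(Rl A T b l) / (2 * s ^ 2)
          + -((u - ul A T b l) ⬝ᵥ ((Hl A T l) *ᵥ (u - ul A T b l))) / (2 * s ^ 2) := by
      have hGl : (-∑ i, (T.mulVec u) i ^ 2) / (2 * t ^ 2)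
          = (-(l * ∑ i, (T.mulVec u) i ^ 2)) / (2 * s ^ 2) := by
        rw [hldef]; field_simp
      rw [hGl]
      linear_combination (-(1:ℝ)/(2*s^2)) * hcs
    calc (2 * π * s ^ 2) ^ (-(m : ℝ) / 2) *
          Real.exp (-(∑ i, (A.mulVec u - b) i ^ 2) / (2 * s ^ 2)) *
          ((2 * π * t ^ 2) ^ (-(n : ℝ) / 2) * T.det *
            Real.exp (-(∑ i, (T.mulVec u) i ^ 2) / (2 * t ^ 2)))
        = ((2 * π * s ^ 2) ^ (-(m : ℝ) / 2) * ((2 * π * t ^ 2) ^ (-(n : ℝ) / 2) * T.det)) *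
            (Real.exp (-(∑ i, (A.mulVec u - b) i ^ 2) / (2 * s ^ 2)) *
             Real.exp (-(∑ i, (T.mulVec u) i ^ 2) / (2 * t ^ 2))) := by ring
      _ = ((2 * π * s ^ 2) ^ (-(m : ℝ) / 2) * ((2 * π * t ^ 2) ^ (-(n : ℝ) / 2) * T.det)) *
            (Real.exp (-(Rl A T b l) / (2 * s ^ 2)) *
             Real.exp (-((u - ul A T b l) ⬝ᵥ ((Hl A T l) *ᵥ (u - ul A T b l))) / (2 * s ^ 2))) := by
          rw [← Real.exp_add, key, Real.exp_add]
      _ = C * Real.exp (-((u - ul A T b l) ⬝ᵥ ((Hl A T l) *ᵥ (u - ul A T b l))) / (2 * s ^ 2)) := by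
          rw [hC]; ring
  calc (∫ u : Fin n → ℝ,
        (2 * π * s ^ 2) ^ (-(m : ℝ) / 2) *
          Real.exp (-(∑ i, (A.mulVec u - b) i ^ 2) / (2 * s ^ 2)) *
          ((2 * π * t ^ 2) ^ (-(n : ℝ) / 2) * T.det *
            Real.exp (-(∑ i, (T.mulVec u) i ^ 2) / (2 * t ^ 2))))
      = ∫ u : Fin n → ℝ,
          C * Real.exp (-((u - ul A T b l) ⬝ᵥ ((Hl A T l) *ᵥ (u - ul A T b l))) / (2 * s ^ 2)) := by
        simp_rw [hint]
    _ = C * ∫ u : Fin n → ℝ,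
          Real.exp (-((u - ul A T b l) ⬝ᵥ ((Hl A T l) *ᵥ (u - ul A T b l))) / (2 * s ^ 2)) :=
        MeasureTheory.integral_const_mul _ _
    _ = C * ((2 * π * s ^ 2) ^ ((n : ℝ) / 2) / Real.sqrt (Dl A T l)) := by
        rw [quad_integral_shift hpd hs2 (ul A T b l)]; rfl
    _ = _ := by rw [hC]; ring
end closed
section deriv
variable {m n : ℕ} (A : Matrix (Fin m) (Fin n) ℝ) (T : Matrix (Fin n) (Fin n) ℝ)
  (b : Fin m → ℝ)

lemma Hl_continuous : Continuous (fun l : ℝ => Hl A T l) := by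
  apply continuous_matrix
  intro i j
  simp only [Hl, Matrix.add_apply, Matrix.smul_apply, smul_eq_mul]
  fun_prop

lemma Hl_sub (l l' : ℝ) : Hl A T l - Hl A T l' = (l - l') • (Tᵀ * T) := by
  simp only [Hl, sub_smul]
  abel

lemma Wl_entry_continuousAt (hT : IsUnit T.det) {l₀ : ℝ} (hl₀ : 0 < l₀) (i j : Fin n) :
    ContinuousAt (fun l : ℝ => (Hl A T l)⁻¹ i j) l₀ := by
  have hdet : ContinuousAt (fun l : ℝ => (Hl A T l).det) l₀ :=
    ((Hl_continuous A T).matrix_det).continuousAt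
  have hadj : ContinuousAt (fun l : ℝ => (Hl A T l).adjugate i j) l₀ := by
    have : Continuous (fun l : ℝ => (Hl A T l).adjugate) := (Hl_continuous A T).matrix_adjugate
    exact ((continuous_apply j).comp ((continuous_apply i).comp this)).continuousAt
  have hne : (Hl A T l₀).det ≠ 0 := (Hl_posDef A T hT hl₀).det_pos.ne'
  have heq : (fun l : ℝ => (Hl A T l)⁻¹ i j)
      = fun l : ℝ => ((Hl A T l).det)⁻¹ * (Hl A T l).adjugate i j := by
    funext l
    rw [Matrix.inv_def, Ring.inverse_eq_inv, Matrix.smul_apply, smul_eq_mul]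
  rw [heq]
  exact (hdet.inv₀ hne).mul hadj
end deriv
section deriv2
variable {m n : ℕ} (A : Matrix (Fin m) (Fin n) ℝ) (T : Matrix (Fin n) (Fin n) ℝ)
  (b : Fin m → ℝ)

lemma Hl_isUnit_det (hT : IsUnit T.det) {l : ℝ} (hl : 0 < l) : IsUnit (Hl A T l).det :=
  isUnit_iff_ne_zero.mpr (Hl_posDef A T hT hl).det_pos.ne'

lemma Wl_sub (hT : IsUnit T.det) {l l' : ℝ} (hl : 0 < l) (hl' : 0 < l') :
    (Hl A T l)⁻¹ - (Hl A T l')⁻¹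
      = (l' - l) • ((Hl A T l)⁻¹ * ((Tᵀ * T) * (Hl A T l')⁻¹)) := by
  have h1 : (Hl A T l)⁻¹ * (Hl A T l) = 1 := Matrix.nonsing_inv_mul _ (Hl_isUnit_det A T hT hl)
  have h2 : (Hl A T l') * (Hl A T l')⁻¹ = 1 := Matrix.mul_nonsing_inv _ (Hl_isUnit_det A T hT hl')
  have key : (Hl A T l)⁻¹ - (Hl A T l')⁻¹
      = (Hl A T l)⁻¹ * (Hl A T l' - Hl A T l) * (Hl A T l')⁻¹ := by
    rw [mul_sub, sub_mul, mul_assoc, h2, mul_one, mul_assoc, ← mul_assoc, h1, one_mul]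
  rw [key, Hl_sub, mul_smul_comm, smul_mul_assoc, mul_assoc]

lemma Wl_entry_hasDerivAt (hT : IsUnit T.det) {l₀ : ℝ} (hl₀ : 0 < l₀) (i j : Fin n) :
    HasDerivAt (fun l : ℝ => (Hl A T l)⁻¹ i j)
      ((-((Hl A T l₀)⁻¹ * ((Tᵀ * T) * (Hl A T l₀)⁻¹))) i j) l₀ := by
  have hcont : ContinuousAt
      (fun l : ℝ => (-((Hl A T l)⁻¹ * ((Tᵀ * T) * (Hl A T l₀)⁻¹))) i j) l₀ := by
    simp only [Matrix.neg_apply, Matrix.mul_apply]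
    exact Filter.Tendsto.neg (tendsto_finset_sum _ fun k _ =>
      ((Wl_entry_continuousAt A T hT hl₀ i k).mul continuousAt_const))
  rw [hasDerivAt_iff_tendsto_slope]
  have hev : slope (fun l : ℝ => (Hl A T l)⁻¹ i j) l₀
      =ᶠ[nhdsWithin l₀ {l₀}ᶜ]
      fun l : ℝ => (-((Hl A T l)⁻¹ * ((Tᵀ * T) * (Hl A T l₀)⁻¹))) i j := by
    have hmem : Set.Ioi (0:ℝ) ∈ nhdsWithin l₀ {l₀}ᶜ :=
      nhdsWithin_le_nhds (Ioi_mem_nhds hl₀)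
    filter_upwards [hmem, self_mem_nhdsWithin] with l hl hne
    have hW := Wl_sub A T hT hl hl₀
    have hentry : (Hl A T l)⁻¹ i j - (Hl A T l₀)⁻¹ i j
        = (l₀ - l) * ((Hl A T l)⁻¹ * ((Tᵀ * T) * (Hl A T l₀)⁻¹)) i j := by
      have := congrArg (fun M : Matrix (Fin n) (Fin n) ℝ => M i j) hW
      simpa [Matrix.sub_apply, Matrix.smul_apply, smul_eq_mul] using this
    rw [slope_def_field]
    rw [div_eq_iff (sub_ne_zero.mpr (by simpa using hne))]
    rw [hentry, Matrix.neg_apply]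
    ring
  exact Filter.Tendsto.congr' hev.symm
    ((hcont.tendsto).mono_left nhdsWithin_le_nhds)
end deriv2
section deriv3
variable {m n : ℕ} (A : Matrix (Fin m) (Fin n) ℝ) (T : Matrix (Fin n) (Fin n) ℝ)
  (b : Fin m → ℝ)

lemma Dl_hasDerivAt (hT : IsUnit T.det) {l₀ : ℝ} (hl₀ : 0 < l₀) :
    HasDerivAt (fun l : ℝ => Dl A T l)
      (Dl A T l₀ * ((Hl A T l₀)⁻¹ * (Tᵀ * T)).trace) l₀ := by
  set M₀ := (Hl A T l₀)⁻¹ * (Tᵀ * T) with hM₀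
  have hfac : ∀ l : ℝ, Hl A T l = Hl A T l₀ * (1 + (l - l₀) • M₀) := by
    intro l
    have h2 : Hl A T l₀ * ((l - l₀) • M₀) = (l - l₀) • (Tᵀ * T) := by
      rw [mul_smul_comm, hM₀, ← mul_assoc,
        Matrix.mul_nonsing_inv _ (Hl_isUnit_det A T hT hl₀), one_mul]
    rw [mul_add, mul_one, h2]
    have h3 := Hl_sub A T l l₀
    rw [← h3]
    abel
  set Q := (Matrix.det (1 + (Polynomial.X : Polynomial ℝ) • M₀.map Polynomial.C)).divX.divX
    with hQ
  have hD : ∀ l : ℝ, Dl A T l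
      = Dl A T l₀ * (1 + M₀.trace * (l - l₀) + Polynomial.eval (l - l₀) Q * (l - l₀) ^ 2) := by
    intro l
    rw [Dl, hfac l, Matrix.det_mul, Matrix.det_one_add_smul, Dl]
  have h1 : HasDerivAt (fun l : ℝ => l - l₀) 1 l₀ := (hasDerivAt_id l₀).sub_const l₀
  have hQd : HasDerivAt (fun l : ℝ => Polynomial.eval (l - l₀) Q)
      (Polynomial.eval 0 (Polynomial.derivative Q)) l₀ := by
    have h := (Q.comp (Polynomial.X - Polynomial.C l₀)).hasDerivAt l₀
    simp only [Polynomial.eval_comp, Polynomial.eval_sub, Polynomial.eval_X, Polynomial.eval_C,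
      Polynomial.derivative_comp, Polynomial.eval_mul, Polynomial.derivative_sub,
      Polynomial.derivative_X, Polynomial.derivative_C, Polynomial.eval_one, sub_zero, sub_self,
      one_mul] at h
    exact h
  have hsq : HasDerivAt (fun l : ℝ => (l - l₀) ^ 2) 0 l₀ := by
    have := h1.fun_pow 2
    simpa [sub_self] using this
  have htr : HasDerivAt (fun l : ℝ => M₀.trace * (l - l₀)) M₀.trace l₀ := by
    simpa using h1.const_mul M₀.trace
  have hprod : HasDerivAt (fun l : ℝ => Polynomial.eval (l - l₀) Q * (l - l₀) ^ 2) 0 l₀ := by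
    have := hQd.fun_mul hsq
    simpa [sub_self] using this
  have hφ : HasDerivAt
      (fun l : ℝ => Dl A T l₀ * (1 + M₀.trace * (l - l₀) + Polynomial.eval (l - l₀) Q * (l - l₀) ^ 2))
      (Dl A T l₀ * (0 + M₀.trace + 0)) l₀ := by
    exact (((hasDerivAt_const l₀ (1:ℝ)).add htr).add hprod).const_mul (Dl A T l₀)
  have hfun : (fun l : ℝ => Dl A T l)
      = fun l : ℝ => Dl A T l₀ * (1 + M₀.trace * (l - l₀) + Polynomial.eval (l - l₀) Q * (l - l₀) ^ 2) :=
    funext hD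
  rw [hfun]
  convert hφ using 1
  ring

lemma Rl_hasDerivAt (hT : IsUnit T.det) {l₀ : ℝ} (hl₀ : 0 < l₀) :
    HasDerivAt (fun l : ℝ => Rl A T b l) (∑ i, (T *ᵥ ul A T b l₀) i ^ 2) l₀ := by
  set β := Aᵀ *ᵥ b with hβ
  have hsum : HasDerivAt (fun l : ℝ => β ⬝ᵥ ((Hl A T l)⁻¹ *ᵥ β))
      (β ⬝ᵥ ((-((Hl A T l₀)⁻¹ * ((Tᵀ * T) * (Hl A T l₀)⁻¹))) *ᵥ β)) l₀ := by
    simp only [dotProduct, Matrix.mulVec]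
    apply HasDerivAt.fun_sum
    intro i _
    have inner : HasDerivAt (fun l : ℝ => (fun j => (Hl A T l)⁻¹ i j) ⬝ᵥ β)
        ((fun j => (-((Hl A T l₀)⁻¹ * ((Tᵀ * T) * (Hl A T l₀)⁻¹))) i j) ⬝ᵥ β) l₀ := by
      simp only [dotProduct]
      exact HasDerivAt.fun_sum fun j _ => (Wl_entry_hasDerivAt A T hT hl₀ i j).mul_const (β j)
    exact inner.const_mul (β i)
  have hWs : ((Hl A T l₀)⁻¹)ᵀ = (Hl A T l₀)⁻¹ := by
    rw [Matrix.transpose_nonsing_inv, Hl_transpose]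
  have hval : β ⬝ᵥ ((-((Hl A T l₀)⁻¹ * ((Tᵀ * T) * (Hl A T l₀)⁻¹))) *ᵥ β)
      = -(∑ i, (T *ᵥ ul A T b l₀) i ^ 2) := by
    rw [Matrix.neg_mulVec, dotProduct_neg]
    congr 1
    rw [← Matrix.mulVec_mulVec, Matrix.dotProduct_mulVec]
    have hvm : β ᵥ* (Hl A T l₀)⁻¹ = ul A T b l₀ := by
      conv_lhs => rw [← hWs]
      rw [Matrix.vecMul_transpose]
      rfl
    rw [hvm, ← Matrix.mulVec_mulVec]
    have : (Hl A T l₀)⁻¹ *ᵥ β = ul A T b l₀ := rfl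
    rw [this, dot_TtT T (ul A T b l₀), dot_sq_eq]
  have hfinal : HasDerivAt (fun l : ℝ => Rl A T b l)
      (-(β ⬝ᵥ ((-((Hl A T l₀)⁻¹ * ((Tᵀ * T) * (Hl A T l₀)⁻¹))) *ᵥ β))) l₀ := by
    have : (fun l : ℝ => Rl A T b l) = fun l : ℝ => b ⬝ᵥ b - β ⬝ᵥ ((Hl A T l)⁻¹ *ᵥ β) := by
      funext l; rw [Rl]; rfl
    rw [this]
    exact hsum.const_sub (b ⬝ᵥ b)
  rw [hval] at hfinal
  simpa using hfinal
end deriv3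
set_option maxHeartbeats 2000000 in
/-- if `(σ, η)` maximizes the marginal likelihood `p(b|σ,η)` of the Gaussian
model (prior density `∝ exp(−‖Tu‖²/(2η²))` with `T` invertible, likelihood `N(Au, σ²I_m)`),
then with `λ = σ²/η²`, `H = AᵀA + λTᵀT` positive definite, and `u_λ = H⁻¹Aᵀb`:
`σ² = ‖Au_λ−b‖²/(m − trace(H⁻¹AᵀA))` and `η² = ‖Tu_λ‖²/(n − λ trace(H⁻¹TᵀT))`,
provided the denominators are nonzero. -/
theorem maximum_evidence_stationarity
    (m n : ℕ) (hm : 0 < m) (hn : 0 < n)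
    (A : Matrix (Fin m) (Fin n) ℝ) (T : Matrix (Fin n) (Fin n) ℝ)
    (hT : IsUnit T.det)
    (b : Fin m → ℝ) (σ η : ℝ) (hσ : 0 < σ) (hη : 0 < η)
    (lam : ℝ) (hlamdef : lam = σ ^ 2 / η ^ 2)
    (H : Matrix (Fin n) (Fin n) ℝ)
    (hHdef : H = Aᵀ * A + lam • (Tᵀ * T)) (hH : H.PosDef)
    (ulam : Fin n → ℝ) (hulam : ulam = H⁻¹.mulVec (Aᵀ.mulVec b))
    (p : ℝ → ℝ → ℝ)
    (hp : ∀ s t : ℝ, p s t =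
      ∫ u : Fin n → ℝ,
        (2 * Real.pi * s ^ 2) ^ (-(m : ℝ) / 2) *
          Real.exp (-(∑ i, (A.mulVec u - b) i ^ 2) / (2 * s ^ 2)) *
          ((2 * Real.pi * t ^ 2) ^ (-(n : ℝ) / 2) * T.det *
            Real.exp (-(∑ i, (T.mulVec u) i ^ 2) / (2 * t ^ 2))))
    (hmax : ∀ s t : ℝ, 0 < s → 0 < t → p s t ≤ p σ η)
    (hden1 : (m : ℝ) - (H⁻¹ * (Aᵀ * A)).trace ≠ 0)
    (hden2 : (n : ℝ) - lam * (H⁻¹ * (Tᵀ * T)).trace ≠ 0) :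
    σ ^ 2 = (∑ i, (A.mulVec ulam - b) i ^ 2) / ((m : ℝ) - (H⁻¹ * (Aᵀ * A)).trace) ∧
    η ^ 2 = (∑ i, (T.mulVec ulam) i ^ 2) / ((n : ℝ) - lam * (H⁻¹ * (Tᵀ * T)).trace) := by
  have hπ := Real.pi_pos
  have hl₀ : 0 < lam := by rw [hlamdef]; positivity
  have hH' : H = Hl A T lam := hHdef
  have hu' : ulam = ul A T b lam := by rw [hulam, hH']; rfl
  have hx : (0:ℝ) < σ ^ 2 := by positivity
  have hy : (0:ℝ) < η ^ 2 := by positivity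
  have harg : σ ^ 2 / η ^ 2 = lam := hlamdef.symm
  have hTdet : T.det ≠ 0 := hT.ne_zero
  -- abbreviations (plain)
  have hDpos : 0 < Dl A T lam := (Hl_posDef A T hT hl₀).det_pos
  have hSpos : 0 < Real.sqrt (Dl A T lam) := Real.sqrt_pos.mpr hDpos
  -- trace identity
  have htrace : (n : ℝ) = ((Hl A T lam)⁻¹ * (Aᵀ * A)).trace
      + lam * ((Hl A T lam)⁻¹ * (Tᵀ * T)).trace := by
    have h1 : (Hl A T lam)⁻¹ * (Hl A T lam) = 1 :=
      Matrix.nonsing_inv_mul _ (Hl_isUnit_det A T hT hl₀)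
    have h2 : (Hl A T lam)⁻¹ * (Hl A T lam)
        = (Hl A T lam)⁻¹ * (Aᵀ * A) + lam • ((Hl A T lam)⁻¹ * (Tᵀ * T)) := by
      show (Hl A T lam)⁻¹ * (Aᵀ * A + lam • (Tᵀ * T)) = _
      rw [mul_add, mul_smul_comm]
    have h3 := congrArg Matrix.trace (h1.symm.trans h2)
    rw [Matrix.trace_one, Matrix.trace_add, Matrix.trace_smul] at h3
    simpa [smul_eq_mul] using h3
  have hRfg : Rl A T b lam = (∑ i, (A *ᵥ ul A T b lam - b) i ^ 2)
      + lam * (∑ i, (T *ᵥ ul A T b lam) i ^ 2) := by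
    have := complete_square A T b hT hl₀ (ul A T b lam)
    simpa [dotProduct] using this.symm
  have hx2 : σ ^ 2 = lam * η ^ 2 := by rw [hlamdef]; field_simp
  -- ===== x-direction =====
  set P : ℝ → ℝ := fun x =>
    (2 * π * x) ^ (-(m : ℝ) / 2) * ((2 * π * η ^ 2) ^ (-(n : ℝ) / 2) * T.det) *
      ((2 * π * x) ^ ((n : ℝ) / 2) *
        ((Real.sqrt (Dl A T (x / η ^ 2)))⁻¹ *
          Real.exp (-(Rl A T b (x / η ^ 2)) / (2 * x)))) with hPdef
  have hPs : ∀ s : ℝ, 0 < s → p s η = P (s ^ 2) := by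
    intro s hs
    rw [hp, p_closed A T b hT hs hη]
  have hmaxP : IsLocalMax P (σ ^ 2) := by
    have hev : ∀ᶠ x in nhds (σ ^ 2), 0 < x := eventually_gt_nhds hx
    filter_upwards [hev] with x hxpos
    have h1 : P x = p (Real.sqrt x) η := by
      rw [hPs (Real.sqrt x) (Real.sqrt_pos.mpr hxpos), Real.sq_sqrt hxpos.le]
    rw [h1, ← hPs σ hσ]
    exact hmax _ _ (Real.sqrt_pos.mpr hxpos) hη
  have hlin : HasDerivAt (fun x : ℝ => 2 * π * x) (2 * π) (σ ^ 2) := by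
    simpa using (hasDerivAt_id (σ ^ 2)).const_mul (2 * π)
  have ha : (0:ℝ) < 2 * π * σ ^ 2 := by positivity
  have hF1 : HasDerivAt (fun x : ℝ => (2 * π * x) ^ (-(m : ℝ) / 2))
      (2 * π * (-(m : ℝ) / 2) * (2 * π * σ ^ 2) ^ (-(m : ℝ) / 2 - 1)) (σ ^ 2) :=
    hlin.rpow_const (Or.inl ha.ne')
  have hF2 : HasDerivAt (fun x : ℝ => (2 * π * x) ^ ((n : ℝ) / 2))
      (2 * π * ((n : ℝ) / 2) * (2 * π * σ ^ 2) ^ ((n : ℝ) / 2 - 1)) (σ ^ 2) :=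
    hlin.rpow_const (Or.inl ha.ne')
  have hdiv : HasDerivAt (fun x : ℝ => x / η ^ 2) (1 / η ^ 2) (σ ^ 2) := by
    simpa using (hasDerivAt_id (σ ^ 2)).div_const (η ^ 2)
  have hDcomp : HasDerivAt (fun x : ℝ => Dl A T (x / η ^ 2))
      (Dl A T lam * ((Hl A T lam)⁻¹ * (Tᵀ * T)).trace * (1 / η ^ 2)) (σ ^ 2) := by
    have hg : HasDerivAt (fun l : ℝ => Dl A T l)
        (Dl A T lam * ((Hl A T lam)⁻¹ * (Tᵀ * T)).trace) (σ ^ 2 / η ^ 2) := by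
      rw [harg]; exact Dl_hasDerivAt A T hT hl₀
    exact hg.comp (σ ^ 2) hdiv
  have hargD : Dl A T (σ ^ 2 / η ^ 2) = Dl A T lam := by rw [harg]
  have hsqrt : HasDerivAt (fun x : ℝ => Real.sqrt (Dl A T (x / η ^ 2)))
      (1 / (2 * Real.sqrt (Dl A T lam)) *
        (Dl A T lam * ((Hl A T lam)⁻¹ * (Tᵀ * T)).trace * (1 / η ^ 2))) (σ ^ 2) := by
    have h := (Real.hasDerivAt_sqrt (by rw [hargD]; exact hDpos.ne')).comp (σ ^ 2) hDcomp
    simpa [hargD, Function.comp_def] using h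
  have hinv : HasDerivAt (fun x : ℝ => (Real.sqrt (Dl A T (x / η ^ 2)))⁻¹)
      (-(1 / (2 * Real.sqrt (Dl A T lam)) *
          (Dl A T lam * ((Hl A T lam)⁻¹ * (Tᵀ * T)).trace * (1 / η ^ 2))) /
        Real.sqrt (Dl A T lam) ^ 2) (σ ^ 2) := by
    have h := hsqrt.inv (by rw [hargD]; exact hSpos.ne')
    simpa [hargD, Pi.inv_def] using h
  have hRcomp : HasDerivAt (fun x : ℝ => Rl A T b (x / η ^ 2))
      ((∑ i, (T *ᵥ ul A T b lam) i ^ 2) * (1 / η ^ 2)) (σ ^ 2) := by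
    have hg : HasDerivAt (fun l : ℝ => Rl A T b l)
        (∑ i, (T *ᵥ ul A T b lam) i ^ 2) (σ ^ 2 / η ^ 2) := by
      rw [harg]; exact Rl_hasDerivAt A T b hT hl₀
    exact HasDerivAt.comp (h₂ := fun l => Rl A T b l) (h := fun x : ℝ => x / η ^ 2) (σ ^ 2) hg hdiv
  have hden : HasDerivAt (fun x : ℝ => 2 * x) 2 (σ ^ 2) := by
    simpa using (hasDerivAt_id (σ ^ 2)).const_mul 2
  have hI : HasDerivAt (fun x : ℝ => -(Rl A T b (x / η ^ 2)) / (2 * x))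
      ((-((∑ i, (T *ᵥ ul A T b lam) i ^ 2) * (1 / η ^ 2)) * (2 * σ ^ 2) -
          -(Rl A T b (σ ^ 2 / η ^ 2)) * 2) / (2 * σ ^ 2) ^ 2) (σ ^ 2) :=
    hRcomp.neg.div hden (by positivity)
  have hexp : HasDerivAt (fun x : ℝ => Real.exp (-(Rl A T b (x / η ^ 2)) / (2 * x)))
      (Real.exp (-(Rl A T b (σ ^ 2 / η ^ 2)) / (2 * σ ^ 2)) *
        ((-((∑ i, (T *ᵥ ul A T b lam) i ^ 2) * (1 / η ^ 2)) * (2 * σ ^ 2) -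
          -(Rl A T b (σ ^ 2 / η ^ 2)) * 2) / (2 * σ ^ 2) ^ 2)) (σ ^ 2) := hI.exp
  have h12 : HasDerivAt (fun x : ℝ =>
      (2 * π * x) ^ (-(m : ℝ) / 2) * ((2 * π * η ^ 2) ^ (-(n : ℝ) / 2) * T.det))
      (2 * π * (-(m : ℝ) / 2) * (2 * π * σ ^ 2) ^ (-(m : ℝ) / 2 - 1) *
        ((2 * π * η ^ 2) ^ (-(n : ℝ) / 2) * T.det)) (σ ^ 2) :=
    hF1.mul_const _
  have h34 := hinv.fun_mul hexp
  have h234 := hF2.fun_mul h34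
  have hPd := h12.fun_mul h234
  have hE0 := hmaxP.hasDerivAt_eq_zero hPd
  rw [harg] at hE0
  rw [show (2 * π * σ ^ 2) ^ (-(m : ℝ) / 2 - 1)
      = (2 * π * σ ^ 2) ^ (-(m : ℝ) / 2) / (2 * π * σ ^ 2) by
    rw [Real.rpow_sub ha, Real.rpow_one]] at hE0
  rw [show (2 * π * σ ^ 2) ^ ((n : ℝ) / 2 - 1)
      = (2 * π * σ ^ 2) ^ ((n : ℝ) / 2) / (2 * π * σ ^ 2) by
    rw [Real.rpow_sub ha, Real.rpow_one]] at hE0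
  rw [show Dl A T lam * ((Hl A T lam)⁻¹ * (Tᵀ * T)).trace * (1 / η ^ 2)
      = Real.sqrt (Dl A T lam) ^ 2 * ((Hl A T lam)⁻¹ * (Tᵀ * T)).trace * (1 / η ^ 2) by
    rw [Real.sq_sqrt hDpos.le]] at hE0
  set Pi1 : ℝ := (2 * π * σ ^ 2) ^ (-(m : ℝ) / 2) * ((2 * π * η ^ 2) ^ (-(n : ℝ) / 2) * T.det) *
      ((2 * π * σ ^ 2) ^ ((n : ℝ) / 2) *
        ((Real.sqrt (Dl A T lam))⁻¹ * Real.exp (-Rl A T b lam / (2 * σ ^ 2)))) with hPi1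
  set G1 : ℝ := (((n : ℝ) - m) * σ ^ 2 * η ^ 2
      - ((Hl A T lam)⁻¹ * (Tᵀ * T)).trace * (σ ^ 2 * σ ^ 2)
      + Rl A T b lam * η ^ 2
      - (∑ i, (T *ᵥ ul A T b lam) i ^ 2) * σ ^ 2) / (2 * σ ^ 2 * σ ^ 2 * η ^ 2) with hG1
  have hkey : 2 * π * (-(m:ℝ) / 2) * ((2 * π * σ ^ 2) ^ (-(m:ℝ) / 2) / (2 * π * σ ^ 2)) *
        ((2 * π * η ^ 2) ^ (-(n:ℝ) / 2) * T.det) *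
        ((2 * π * σ ^ 2) ^ ((n:ℝ) / 2) *
          ((Real.sqrt (Dl A T lam))⁻¹ * Real.exp (-Rl A T b lam / (2 * σ ^ 2)))) +
      (2 * π * σ ^ 2) ^ (-(m:ℝ) / 2) * ((2 * π * η ^ 2) ^ (-(n:ℝ) / 2) * T.det) *
        (2 * π * ((n:ℝ) / 2) * ((2 * π * σ ^ 2) ^ ((n:ℝ) / 2) / (2 * π * σ ^ 2)) *
            ((Real.sqrt (Dl A T lam))⁻¹ * Real.exp (-Rl A T b lam / (2 * σ ^ 2))) +
          (2 * π * σ ^ 2) ^ ((n:ℝ) / 2) *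
            (-(1 / (2 * Real.sqrt (Dl A T lam)) *
                (Real.sqrt (Dl A T lam) ^ 2 * ((Hl A T lam)⁻¹ * (Tᵀ * T)).trace * (1 / η ^ 2))) /
                  Real.sqrt (Dl A T lam) ^ 2 *
                Real.exp (-Rl A T b lam / (2 * σ ^ 2)) +
              (Real.sqrt (Dl A T lam))⁻¹ *
                (Real.exp (-Rl A T b lam / (2 * σ ^ 2)) *
                  ((-((∑ i, (T *ᵥ ul A T b lam) i ^ 2) * (1 / η ^ 2)) * (2 * σ ^ 2) -
                    -Rl A T b lam * 2) / (2 * σ ^ 2) ^ 2))))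
      = Pi1 * G1 := by
    rw [hPi1, hG1]
    have hπne : π ≠ 0 := hπ.ne'
    have hσne : σ ≠ 0 := hσ.ne'
    have hηne : η ≠ 0 := hη.ne'
    have hqne : Real.sqrt (Dl A T lam) ≠ 0 := hSpos.ne'
    field_simp
    ring
  have hG0 : Pi1 * G1 = 0 := by rw [← hkey]; exact hE0
  have hPi1ne : Pi1 ≠ 0 := by
    rw [hPi1]
    have h1 : (0:ℝ) < (2 * π * σ ^ 2) ^ (-(m:ℝ) / 2) := Real.rpow_pos_of_pos ha _
    have h2 : (0:ℝ) < (2 * π * η ^ 2) ^ (-(n:ℝ) / 2) := Real.rpow_pos_of_pos (by positivity) _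
    have h3 : (0:ℝ) < (2 * π * σ ^ 2) ^ ((n:ℝ) / 2) := Real.rpow_pos_of_pos ha _
    exact mul_ne_zero (mul_ne_zero h1.ne' (mul_ne_zero h2.ne' hTdet))
      (mul_ne_zero h3.ne' (mul_ne_zero (inv_ne_zero hSpos.ne') (Real.exp_pos _).ne'))
  have hG1z : G1 = 0 := by
    rcases mul_eq_zero.mp hG0 with h | h
    · exact absurd h hPi1ne
    · exact h
  have hnum : ((n : ℝ) - m) * σ ^ 2 * η ^ 2
      - ((Hl A T lam)⁻¹ * (Tᵀ * T)).trace * (σ ^ 2 * σ ^ 2)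
      + Rl A T b lam * η ^ 2
      - (∑ i, (T *ᵥ ul A T b lam) i ^ 2) * σ ^ 2 = 0 := by
    rw [hG1] at hG1z
    rcases div_eq_zero_iff.mp hG1z with h | h
    · exact h
    · exact absurd h (by positivity)
  have main1 : σ ^ 2 * ((m : ℝ) - ((Hl A T lam)⁻¹ * (Aᵀ * A)).trace)
      = ∑ i, (A *ᵥ ul A T b lam - b) i ^ 2 := by
    have main1' : σ ^ 2 * ((m : ℝ) - ((Hl A T lam)⁻¹ * (Aᵀ * A)).trace) * η ^ 2
        = (∑ i, (A *ᵥ ul A T b lam - b) i ^ 2) * η ^ 2 := by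
      linear_combination (-1 : ℝ) * hnum + (σ ^ 2 * η ^ 2) * htrace + (η ^ 2) * hRfg
        + (-(((Hl A T lam)⁻¹ * (Tᵀ * T)).trace * σ ^ 2 + ∑ i, (T *ᵥ ul A T b lam) i ^ 2)) * hx2
    exact mul_right_cancel₀ (pow_ne_zero 2 hη.ne') main1'
  -- ===== y-direction =====
  set Pt : ℝ → ℝ := fun y =>
    (2 * π * σ ^ 2) ^ (-(m : ℝ) / 2) * ((2 * π * y) ^ (-(n : ℝ) / 2) * T.det) *
      ((2 * π * σ ^ 2) ^ ((n : ℝ) / 2) *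
        ((Real.sqrt (Dl A T (σ ^ 2 / y)))⁻¹ *
          Real.exp (-(Rl A T b (σ ^ 2 / y)) / (2 * σ ^ 2)))) with hPtdef
  have hPts : ∀ t : ℝ, 0 < t → p σ t = Pt (t ^ 2) := by
    intro t ht
    rw [hp, p_closed A T b hT hσ ht]
  have hmaxPt : IsLocalMax Pt (η ^ 2) := by
    have hev : ∀ᶠ y in nhds (η ^ 2), 0 < y := eventually_gt_nhds hy
    filter_upwards [hev] with y hypos
    have h1 : Pt y = p σ (Real.sqrt y) := by
      rw [hPts (Real.sqrt y) (Real.sqrt_pos.mpr hypos), Real.sq_sqrt hypos.le]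
    rw [h1, ← hPts η hη]
    exact hmax _ _ hσ (Real.sqrt_pos.mpr hypos)
  have hlin2 : HasDerivAt (fun y : ℝ => 2 * π * y) (2 * π) (η ^ 2) := by
    simpa using (hasDerivAt_id (η ^ 2)).const_mul (2 * π)
  have hb : (0:ℝ) < 2 * π * η ^ 2 := by positivity
  have hF1t : HasDerivAt (fun y : ℝ => (2 * π * y) ^ (-(n : ℝ) / 2))
      (2 * π * (-(n : ℝ) / 2) * (2 * π * η ^ 2) ^ (-(n : ℝ) / 2 - 1)) (η ^ 2) :=
    hlin2.rpow_const (Or.inl hb.ne')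
  have hdiv2 : HasDerivAt (fun y : ℝ => σ ^ 2 / y) (σ ^ 2 * -(((η ^ 2) ^ 2)⁻¹)) (η ^ 2) := by
    have h := (hasDerivAt_inv (by positivity : (η:ℝ) ^ 2 ≠ 0)).const_mul (σ ^ 2)
    simpa [div_eq_mul_inv] using h
  have hDcomp2 : HasDerivAt (fun y : ℝ => Dl A T (σ ^ 2 / y))
      (Dl A T lam * ((Hl A T lam)⁻¹ * (Tᵀ * T)).trace * (σ ^ 2 * -(((η ^ 2) ^ 2)⁻¹)))
      (η ^ 2) := by
    have hg : HasDerivAt (fun l : ℝ => Dl A T l)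
        (Dl A T lam * ((Hl A T lam)⁻¹ * (Tᵀ * T)).trace) (σ ^ 2 / η ^ 2) := by
      rw [harg]; exact Dl_hasDerivAt A T hT hl₀
    exact hg.comp (η ^ 2) hdiv2
  have hargD : Dl A T (σ ^ 2 / η ^ 2) = Dl A T lam := by rw [harg]
  have hsqrt2 : HasDerivAt (fun y : ℝ => Real.sqrt (Dl A T (σ ^ 2 / y)))
      (1 / (2 * Real.sqrt (Dl A T lam)) *
        (Dl A T lam * ((Hl A T lam)⁻¹ * (Tᵀ * T)).trace * (σ ^ 2 * -(((η ^ 2) ^ 2)⁻¹))))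
      (η ^ 2) := by
    have h := (Real.hasDerivAt_sqrt (by rw [hargD]; exact hDpos.ne')).comp (η ^ 2) hDcomp2
    simpa [hargD, Function.comp_def] using h
  have hinv2 : HasDerivAt (fun y : ℝ => (Real.sqrt (Dl A T (σ ^ 2 / y)))⁻¹)
      (-(1 / (2 * Real.sqrt (Dl A T lam)) *
          (Dl A T lam * ((Hl A T lam)⁻¹ * (Tᵀ * T)).trace * (σ ^ 2 * -(((η ^ 2) ^ 2)⁻¹)))) /
        Real.sqrt (Dl A T lam) ^ 2) (η ^ 2) := by
    have h := hsqrt2.inv (by rw [hargD]; exact hSpos.ne')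
    simpa [hargD, Pi.inv_def] using h
  have hRcomp2 : HasDerivAt (fun y : ℝ => Rl A T b (σ ^ 2 / y))
      ((∑ i, (T *ᵥ ul A T b lam) i ^ 2) * (σ ^ 2 * -(((η ^ 2) ^ 2)⁻¹))) (η ^ 2) := by
    have hg : HasDerivAt (fun l : ℝ => Rl A T b l)
        (∑ i, (T *ᵥ ul A T b lam) i ^ 2) (σ ^ 2 / η ^ 2) := by
      rw [harg]; exact Rl_hasDerivAt A T b hT hl₀
    exact hg.comp (η ^ 2) hdiv2
  have hexp2 : HasDerivAt (fun y : ℝ => Real.exp (-(Rl A T b (σ ^ 2 / y)) / (2 * σ ^ 2)))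
      (Real.exp (-(Rl A T b (σ ^ 2 / η ^ 2)) / (2 * σ ^ 2)) *
        (-((∑ i, (T *ᵥ ul A T b lam) i ^ 2) * (σ ^ 2 * -(((η ^ 2) ^ 2)⁻¹))) / (2 * σ ^ 2)))
      (η ^ 2) :=
    (hRcomp2.neg.div_const (2 * σ ^ 2)).exp
  have hfirstt : HasDerivAt (fun y : ℝ =>
      (2 * π * σ ^ 2) ^ (-(m : ℝ) / 2) * ((2 * π * y) ^ (-(n : ℝ) / 2) * T.det))
      ((2 * π * σ ^ 2) ^ (-(m : ℝ) / 2) *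
        (2 * π * (-(n : ℝ) / 2) * (2 * π * η ^ 2) ^ (-(n : ℝ) / 2 - 1) * T.det)) (η ^ 2) :=
    (hF1t.mul_const T.det).const_mul _
  have h34t := hinv2.fun_mul hexp2
  have hsecondt := h34t.const_mul ((2 * π * σ ^ 2) ^ ((n : ℝ) / 2))
  have hPtd := hfirstt.fun_mul hsecondt
  have hE0t := hmaxPt.hasDerivAt_eq_zero hPtd
  rw [harg] at hE0t
  rw [show (2 * π * η ^ 2) ^ (-(n : ℝ) / 2 - 1)
      = (2 * π * η ^ 2) ^ (-(n : ℝ) / 2) / (2 * π * η ^ 2) by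
    rw [Real.rpow_sub hb, Real.rpow_one]] at hE0t
  rw [show Dl A T lam * ((Hl A T lam)⁻¹ * (Tᵀ * T)).trace * (σ ^ 2 * -(((η ^ 2) ^ 2)⁻¹))
      = Real.sqrt (Dl A T lam) ^ 2 * ((Hl A T lam)⁻¹ * (Tᵀ * T)).trace *
        (σ ^ 2 * -(((η ^ 2) ^ 2)⁻¹)) by
    rw [Real.sq_sqrt hDpos.le]] at hE0t
  set G2 : ℝ := (-(n : ℝ) * η ^ 2 + ((Hl A T lam)⁻¹ * (Tᵀ * T)).trace * σ ^ 2
      + ∑ i, (T *ᵥ ul A T b lam) i ^ 2) / (2 * η ^ 2 * η ^ 2) with hG2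
  have hkey2 : (2 * π * σ ^ 2) ^ (-(m:ℝ) / 2) *
        (2 * π * (-(n:ℝ) / 2) * ((2 * π * η ^ 2) ^ (-(n:ℝ) / 2) / (2 * π * η ^ 2)) * T.det) *
        ((2 * π * σ ^ 2) ^ ((n:ℝ) / 2) *
          ((Real.sqrt (Dl A T lam))⁻¹ * Real.exp (-Rl A T b lam / (2 * σ ^ 2)))) +
      (2 * π * σ ^ 2) ^ (-(m:ℝ) / 2) * ((2 * π * η ^ 2) ^ (-(n:ℝ) / 2) * T.det) *
        ((2 * π * σ ^ 2) ^ ((n:ℝ) / 2) *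
          (-(1 / (2 * Real.sqrt (Dl A T lam)) *
                (Real.sqrt (Dl A T lam) ^ 2 * ((Hl A T lam)⁻¹ * (Tᵀ * T)).trace *
                  (σ ^ 2 * -((η ^ 2) ^ 2)⁻¹))) / Real.sqrt (Dl A T lam) ^ 2 *
              Real.exp (-Rl A T b lam / (2 * σ ^ 2)) +
            (Real.sqrt (Dl A T lam))⁻¹ *
              (Real.exp (-Rl A T b lam / (2 * σ ^ 2)) *
                (-((∑ i, (T *ᵥ ul A T b lam) i ^ 2) * (σ ^ 2 * -((η ^ 2) ^ 2)⁻¹)) /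
                  (2 * σ ^ 2)))))
      = Pi1 * G2 := by
    rw [hPi1, hG2]
    have hπne : π ≠ 0 := hπ.ne'
    have hσne : σ ≠ 0 := hσ.ne'
    have hηne : η ≠ 0 := hη.ne'
    have hqne : Real.sqrt (Dl A T lam) ≠ 0 := hSpos.ne'
    field_simp
    ring
  have hG0t : Pi1 * G2 = 0 := by rw [← hkey2]; exact hE0t
  have hG2z : G2 = 0 := by
    rcases mul_eq_zero.mp hG0t with h | h
    · exact absurd h hPi1ne
    · exact h
  have hnum2 : -(n : ℝ) * η ^ 2 + ((Hl A T lam)⁻¹ * (Tᵀ * T)).trace * σ ^ 2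
      + ∑ i, (T *ᵥ ul A T b lam) i ^ 2 = 0 := by
    rw [hG2] at hG2z
    rcases div_eq_zero_iff.mp hG2z with h | h
    · exact h
    · exact absurd h (by positivity)
  have main2 : η ^ 2 * ((n : ℝ) - lam * ((Hl A T lam)⁻¹ * (Tᵀ * T)).trace)
      = ∑ i, (T *ᵥ ul A T b lam) i ^ 2 := by
    linear_combination (-1 : ℝ) * hnum2 + (((Hl A T lam)⁻¹ * (Tᵀ * T)).trace) * hx2
  rw [hH'] at hden1 hden2
  rw [hH', hu']
  constructor
  · rw [eq_div_iff hden1]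
    exact main1
  · rw [eq_div_iff hden2]
    exact main2
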